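/- Let R be a set of requests on a bidirected tree T rooted at a vertex z, and let R^- and R^+ be the sets of converging and diverging requests of R. Then the interference graph I(R^-,T) is a comparability graph, and the interference graph I(R^+,T) is a comparability graph. -/

import Mathlib

open SimpleGraph

/-- A request in a bidirected tree `T`: a directed path of length at least 1,
encoded as a path (walk without vertex repetition) in the underlying tree. -/
structure Request {V : Type*} (T : SimpleGraph V) where
  s : V
  t : V
  toWalk : T.Walk s t
  isPath : toWalk.IsPath
  one_le_length : 1 ≤ toWalk.length

namespace Request

variable {V : Type*} {T : SimpleGraph V}

/-- The second vertex `s_r⁺` of a request. -/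
def sPlus (r : Request T) : V := r.toWalk.getVert 1

/-- The penultimate vertex `t_r⁻` of a request. -/
def tMinus (r : Request T) : V := r.toWalk.getVert (r.toWalk.length - 1)

end Request

variable {V : Type*}

/-- `r` interferes on `r'` if the unique path from `s_r` to `t_{r'}` in the tree `T`
has first arc the emission arc of `r` and last arc the reception arc of `r'`. -/
def InterferesOn (T : SimpleGraph V) (r r' : Request T) : Prop :=
  ∃ p : T.Walk r.s r'.t, p.IsPath ∧ 1 ≤ p.length ∧
    p.getVert 1 = r.sPlus ∧ p.getVert (p.length - 1) = r'.tMinus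

/-- Two requests interfere if one of them interferes on the other. -/
def Interfere (T : SimpleGraph V) (r r' : Request T) : Prop :=
  InterferesOn T r r' ∨ InterferesOn T r' r

/-- `x` is an ancestor of `y` in the tree `T` rooted at `z`:
`x` lies on the unique path from `z` to `y`. -/
def Ancestor (T : SimpleGraph V) (z x y : V) : Prop :=
  ∃ p : T.Walk z y, p.IsPath ∧ x ∈ p.support

/-- Two vertices are related if one is an ancestor of the other. -/
def Related (T : SimpleGraph V) (z x y : V) : Prop :=
  Ancestor T z x y ∨ Ancestor T z y x

section TreeAux
open Walk

variable {T : SimpleGraph V}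

theorem tree_path_eq (hT : T.IsTree) {a b : V} {p q : T.Walk a b}
    (hp : p.IsPath) (hq : q.IsPath) : p = q :=
  (hT.existsUnique_path a b).unique hp hq

noncomputable def pz (hT : T.IsTree) (z v : V) : T.Walk z v :=
  (hT.existsUnique_path z v).choose

theorem pz_isPath (hT : T.IsTree) (z v : V) : (pz hT z v).IsPath :=
  (hT.existsUnique_path z v).choose_spec.1

theorem anc_iff (hT : T.IsTree) {z x v : V} :
    Ancestor T z x v ↔ x ∈ (pz hT z v).support :=
  ⟨fun ⟨p, hp, hx⟩ => by rwa [tree_path_eq hT hp (pz_isPath hT z v)] at hx,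
   fun h => ⟨_, pz_isPath hT z v, h⟩⟩

theorem anc_refl (hT : T.IsTree) (z v : V) : Ancestor T z v v :=
  (anc_iff hT).2 (end_mem_support _)

theorem anc_trans (hT : T.IsTree) {z x y w : V} (hxy : Ancestor T z x y)
    (hyw : Ancestor T z y w) : Ancestor T z x w := by
  classical
  have hy : y ∈ (pz hT z w).support := (anc_iff hT).1 hyw
  have hq : ((pz hT z w).takeUntil y hy).IsPath := (pz_isPath hT z w).takeUntil hy
  have he : pz hT z y = (pz hT z w).takeUntil y hy :=
    tree_path_eq hT (pz_isPath hT z y) hq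
  have hx : x ∈ ((pz hT z w).takeUntil y hy).support := by
    rw [← he]; exact (anc_iff hT).1 hxy
  exact (anc_iff hT).2 (support_takeUntil_subset _ hy hx)

theorem anc_antisymm (hT : T.IsTree) {z x y : V} (hxy : Ancestor T z x y)
    (hyx : Ancestor T z y x) : x = y := by
  classical
  by_contra hne
  have hx : x ∈ (pz hT z y).support := (anc_iff hT).1 hxy
  have he : pz hT z x = (pz hT z y).takeUntil x hx :=
    tree_path_eq hT (pz_isPath hT z x) ((pz_isPath hT z y).takeUntil hx)
  have hyq : y ∈ ((pz hT z y).takeUntil x hx).support := by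
    rw [← he]; exact (anc_iff hT).1 hyx
  have hnd := (pz_isPath hT z y).support_nodup
  rw [← take_spec (pz hT z y) hx, support_append, List.nodup_append] at hnd
  have hyd : y ∈ ((pz hT z y).dropUntil x hx).support := end_mem_support _
  rw [support_eq_cons, List.mem_cons] at hyd
  rcases hyd with h | h
  · exact hne h.symm
  · exact hnd.2.2 _ hyq _ h rfl

theorem pz_concat (hT : T.IsTree) {z a c : V} (had : T.Adj a c)
    (hanc : Ancestor T z a c) : pz hT z c = (pz hT z a).concat had := by
  have hc : c ∉ (pz hT z a).support := by
    intro hc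
    exact had.ne (anc_antisymm hT hanc ((anc_iff hT).2 hc))
  have hp : ((pz hT z a).concat had).IsPath := by
    rw [isPath_def, support_concat, List.nodup_append]
    exact ⟨(pz_isPath hT z a).support_nodup, List.nodup_singleton c,
      by intro u hu v hv; rw [List.mem_singleton] at hv; subst hv; rintro rfl; exact hc hu⟩
  exact tree_path_eq hT (pz_isPath hT z c) hp

theorem adj_related (hT : T.IsTree) (z : V) {a c : V} (had : T.Adj a c) :
    Ancestor T z a c ∨ Ancestor T z c a := by
  by_cases hc : c ∈ (pz hT z a).support
  · exact Or.inr ((anc_iff hT).2 hc)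
  · left
    have hp : ((pz hT z a).concat had).IsPath := by
      rw [isPath_def, support_concat, List.nodup_append]
      exact ⟨(pz_isPath hT z a).support_nodup, List.nodup_singleton c, by intro u hu v hv; rw [List.mem_singleton] at hv; subst hv; rintro rfl; exact hc hu⟩
    exact ⟨_, hp, by rw [support_concat, List.mem_append]; exact Or.inl (end_mem_support _)⟩

theorem getVert_concat_self {u v w : V} (q : T.Walk u v) (h : T.Adj v w) :
    (q.concat h).getVert q.length = v := by
  rw [concat_eq_append, getVert_append]
  simp

theorem parent_eq (hT : T.IsTree) {z a c : V} (had : T.Adj a c)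
    (hanc : Ancestor T z a c) :
    (pz hT z c).getVert ((pz hT z c).length - 1) = a := by
  have h := pz_concat hT had hanc
  rw [h, length_concat, Nat.add_sub_cancel]
  exact getVert_concat_self _ _

theorem anc_of_mem_drop [DecidableEq V] (hT : T.IsTree) {z a x : V} (ha : x ∈ (pz hT z a).support)
    {w : V} (hw : w ∈ ((pz hT z a).dropUntil x ha).support) : Ancestor T z x w := by
  classical
  set d := (pz hT z a).dropUntil x ha with hd
  have hdp : d.IsPath := (pz_isPath hT z a).dropUntil ha
  have hd'p : (d.takeUntil w hw).IsPath := hdp.takeUntil hw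
  have he : pz hT z x = (pz hT z a).takeUntil x ha :=
    tree_path_eq hT (pz_isPath hT z x) ((pz_isPath hT z a).takeUntil ha)
  have hnd := (pz_isPath hT z a).support_nodup
  rw [← take_spec (pz hT z a) ha, support_append, List.nodup_append] at hnd
  have hsub : (d.takeUntil w hw).support.tail ⊆ d.support.tail := by
    intro u hu
    have hu1 : u ∈ (d.takeUntil w hw).support := List.mem_of_mem_tail hu
    have hune : u ≠ x := by
      intro h; subst h
      have := hd'p.support_nodup
      rw [support_eq_cons] at this
      exact (List.nodup_cons.1 this).1 hu
    have hu2 : u ∈ d.support := support_takeUntil_subset _ hw hu1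
    rw [support_eq_cons, List.mem_cons] at hu2
    exact hu2.resolve_left hune
  have hq : ((pz hT z x).append (d.takeUntil w hw)).IsPath := by
    rw [isPath_def, support_append, List.nodup_append]
    refine ⟨(pz_isPath hT z x).support_nodup, hd'p.support_nodup.tail, ?_⟩
    intro u hu1 v hu2 huv
    subst huv
    rw [he] at hu1
    exact hnd.2.2 _ hu1 _ (hsub hu2) rfl
  exact ⟨_, hq, by rw [support_append, List.mem_append]; exact Or.inl (end_mem_support _)⟩

theorem related_of_mem (hT : T.IsTree) {z a x y : V} (hx : x ∈ (pz hT z a).support)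
    (hy : y ∈ (pz hT z a).support) : Ancestor T z x y ∨ Ancestor T z y x := by
  classical
  by_cases hyt : y ∈ ((pz hT z a).takeUntil x hx).support
  · right
    have he : pz hT z x = (pz hT z a).takeUntil x hx :=
      tree_path_eq hT (pz_isPath hT z x) ((pz_isPath hT z a).takeUntil hx)
    exact ⟨_, pz_isPath hT z x, by rw [he]; exact hyt⟩
  · left
    have : y ∈ ((pz hT z a).takeUntil x hx).support ∨
        y ∈ ((pz hT z a).dropUntil x hx).support := by
      rw [← mem_support_append_iff, take_spec]; exact hy
    exact anc_of_mem_drop hT hx (this.resolve_left hyt)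

theorem child_uniq (hT : T.IsTree) {z x w w' a : V} (had : T.Adj x w) (had' : T.Adj x w')
    (hxw : Ancestor T z x w) (hxw' : Ancestor T z x w')
    (hwa : Ancestor T z w a) (hw'a : Ancestor T z w' a) : w = w' := by
  have key : ∀ {u u' : V}, T.Adj x u → T.Adj x u' → Ancestor T z x u → Ancestor T z x u' →
      Ancestor T z u u' → u = u' := by
    intro u u' h1 h2 h3 h4 h5
    have hpc := pz_concat hT h2 h4
    have hu : u ∈ (pz hT z u').support := (anc_iff hT).1 h5
    rw [hpc, support_concat, List.mem_append] at hu
    rcases hu with hu | hu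
    · exact absurd (anc_antisymm hT h3 ((anc_iff hT).2 hu)) h1.ne
    · simpa using hu
  rcases related_of_mem hT ((anc_iff hT).1 hwa) ((anc_iff hT).1 hw'a) with h | h
  · exact key had had' hxw hxw' h
  · exact (key had' had hxw' hxw h).symm

theorem anc_of_avoid (hT : T.IsTree) {z x : V} {a b : V} (q : T.Walk a b) :
    q.IsPath → x ∉ q.support → T.Adj b x → Ancestor T z x b → Ancestor T z b a := by
  induction q with
  | nil => exact fun _ _ _ _ => anc_refl hT z _
  | cons h q ih =>
    rename_i u c bb
    intro hq hx had hanc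
    have hx' : x ∉ q.support := fun hh => hx (by rw [support_cons]; exact List.mem_cons_of_mem _ hh)
    have hbc : Ancestor T z bb c := ih hq.of_cons hx' had hanc
    rcases adj_related hT z h with hac | hca
    · have hpc := pz_concat hT h hac
      have hb : bb ∈ (pz hT z c).support := (anc_iff hT).1 hbc
      rw [hpc, support_concat, List.mem_append] at hb
      rcases hb with hb | hb
      · exact (anc_iff hT).2 hb
      · simp only [List.mem_singleton] at hb
        subst hb
        have h1 := parent_eq hT had.symm hanc
        have h2 := parent_eq hT h hac
        have hxu : x = u := h1.symm.trans h2
        exact absurd (start_mem_support (Walk.cons h q)) (hxu ▸ hx)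
    · exact anc_trans hT hbc hca

end TreeAux

/-- A request is converging (w.r.t. root `z`) if all its arcs are directed towards `z`,
i.e. the head of every arc is an ancestor of its tail. -/
def Converging (T : SimpleGraph V) (z : V) (r : Request T) : Prop :=
  ∀ i < r.toWalk.length, Ancestor T z (r.toWalk.getVert (i+1)) (r.toWalk.getVert i)

/-- A request is diverging (w.r.t. root `z`) if all its arcs are directed away from `z`,
i.e. the tail of every arc is an ancestor of its head. -/
def Diverging (T : SimpleGraph V) (z : V) (r : Request T) : Prop :=
  ∀ i < r.toWalk.length, Ancestor T z (r.toWalk.getVert i) (r.toWalk.getVert (i+1))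

/-- A request is unimodal (w.r.t. root `z`) if it is neither converging nor diverging. -/
def Unimodal (T : SimpleGraph V) (z : V) (r : Request T) : Prop :=
  ¬ Converging T z r ∧ ¬ Diverging T z r

/-- `m` is the middle of the request `r` (w.r.t. root `z`): the vertex of `r`
closest to the root, i.e. the vertex of `r` which is an ancestor of every vertex of `r`. -/
def IsMiddle (T : SimpleGraph V) (z : V) (r : Request T) (m : V) : Prop :=
  m ∈ r.toWalk.support ∧ ∀ y ∈ r.toWalk.support, Ancestor T z m y

/-- The interference graph of a family of requests: two (indices of) requests are
adjacent iff they are distinct and the requests interfere. -/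
def interferenceGraph (T : SimpleGraph V) {ι : Type*} (f : ι → Request T) :
    SimpleGraph ι where
  Adj i j := i ≠ j ∧ Interfere T (f i) (f j)
  symm := by
    constructor
    intro i j h
    exact ⟨h.1.symm, h.2.symm⟩
  loopless := by
    constructor
    intro i h
    exact h.1 rfl

/-- The interference graph of a set of requests. -/
def interGraph (T : SimpleGraph V) (R : Set (Request T)) : SimpleGraph ↥R :=
  interferenceGraph T (fun r => (r : Request T))

/-- The pair `(a, b)` is an arc joining two consecutive vertices of the
bidirected path corresponding to the walk `p` (in either direction). -/
def ArcOn (T : SimpleGraph V) {u v : V} (p : T.Walk u v) (a b : V) : Prop :=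
  ∃ j < p.length, (p.getVert j = a ∧ p.getVert (j+1) = b) ∨
    (p.getVert j = b ∧ p.getVert (j+1) = a)

/-- The request `r` shares an arc with the bidirected path corresponding to
the walk `p`. -/
def SharesArc (T : SimpleGraph V) {u v : V} (p : T.Walk u v) (r : Request T) : Prop :=
  ∃ i < r.toWalk.length, ArcOn T p (r.toWalk.getVert i) (r.toWalk.getVert (i+1))

/-- A leaf of a tree: a vertex with at most one neighbour. -/
def IsLeaf (T : SimpleGraph V) (y : V) : Prop :=
  {w | T.Adj y w}.Subsingleton

/-- A comparability graph: there is a partial order on the vertices such that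
two distinct vertices are adjacent iff they are comparable. -/
def IsComparabilityGraph {α : Type*} (G : SimpleGraph α) : Prop :=
  ∃ le : α → α → Prop, IsPartialOrder α le ∧ ∀ a b, G.Adj a b ↔ a ≠ b ∧ (le a b ∨ le b a)

/-- A cobipartite graph: the vertex set can be partitioned into two cliques. -/
def IsCobipartite {α : Type*} (G : SimpleGraph α) : Prop :=
  ∃ A : Set α, G.IsClique A ∧ G.IsClique Aᶜ

section RequestAux
open Walk

variable {T : SimpleGraph V}

theorem req_adj_s_sPlus (r : Request T) : T.Adj r.s r.sPlus := by
  have h := r.toWalk.adj_getVert_succ (i := 0) (by have := r.one_le_length; omega)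
  rwa [getVert_zero] at h

theorem req_adj_tMinus_t (r : Request T) : T.Adj r.tMinus r.t := by
  have h1 := r.one_le_length
  have h := r.toWalk.adj_getVert_succ (i := r.toWalk.length - 1) (by omega)
  rwa [show r.toWalk.length - 1 + 1 = r.toWalk.length by omega, getVert_length] at h

theorem conv_anc_sPlus {z : V} {r : Request T} (hr : Converging T z r) :
    Ancestor T z r.sPlus r.s := by
  have h := hr 0 (by have := r.one_le_length; omega)
  rwa [getVert_zero] at h

theorem conv_anc_t_tMinus {z : V} {r : Request T} (hr : Converging T z r) :
    Ancestor T z r.t r.tMinus := by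
  have h1 := r.one_le_length
  have h := hr (r.toWalk.length - 1) (by omega)
  rwa [show r.toWalk.length - 1 + 1 = r.toWalk.length by omega, getVert_length] at h

theorem conv_chain (hT : T.IsTree) {z : V} {r : Request T} (hr : Converging T z r) :
    ∀ i, i ≤ r.toWalk.length → Ancestor T z (r.toWalk.getVert i) r.s := by
  intro i
  induction i with
  | zero => intro _; rw [getVert_zero]; exact anc_refl hT z _
  | succ n ihn => intro hle; exact anc_trans hT (hr n (by omega)) (ihn (by omega))

theorem conv_anc_tMinus_s (hT : T.IsTree) {z : V} {r : Request T} (hr : Converging T z r) :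
    Ancestor T z r.tMinus r.s :=
  conv_chain hT hr (r.toWalk.length - 1) (by omega)

theorem anc_tMinus_start (hT : T.IsTree) {z : V} {r' : Request T} (hr' : Converging T z r')
    {s : V} (p : T.Walk s r'.t) (hp : p.IsPath) (hl : 1 ≤ p.length)
    (hpen : p.getVert (p.length - 1) = r'.tMinus) : Ancestor T z r'.tMinus s := by
  classical
  have hmem : r'.tMinus ∈ p.support :=
    mem_support_iff_exists_getVert.2 ⟨p.length - 1, hpen, by omega⟩
  have hqp : (p.takeUntil r'.tMinus hmem).IsPath := hp.takeUntil hmem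
  have ht'notin : r'.t ∉ (p.takeUntil r'.tMinus hmem).support := by
    intro hin
    have hnd := hp.support_nodup
    rw [← take_spec p hmem, support_append, List.nodup_append] at hnd
    have hd : r'.t ∈ (p.dropUntil r'.tMinus hmem).support := end_mem_support _
    rw [support_eq_cons, List.mem_cons] at hd
    rcases hd with hd | hd
    · exact (req_adj_tMinus_t r').ne hd.symm
    · exact hnd.2.2 _ hin _ hd rfl
  exact anc_of_avoid hT _ hqp ht'notin (req_adj_tMinus_t r') (conv_anc_t_tMinus hr')

theorem related_of_interferesOn (hT : T.IsTree) {z : V} {r r' : Request T}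
    (hr : Converging T z r) (hr' : Converging T z r') (h : InterferesOn T r r') :
    Related T z r.tMinus r'.tMinus := by
  obtain ⟨p, hp, hl, _, hpen⟩ := h
  have h1 : Ancestor T z r'.tMinus r.s := anc_tMinus_start hT hr' p hp hl hpen
  have h2 : Ancestor T z r.tMinus r.s := conv_anc_tMinus_s hT hr
  exact related_of_mem hT ((anc_iff hT).1 h2) ((anc_iff hT).1 h1)

theorem interferesOn_of_anc (hT : T.IsTree) {z : V} {r r' : Request T}
    (hr : Converging T z r) (hr' : Converging T z r')
    (h : Ancestor T z r'.tMinus r.tMinus) : InterferesOn T r r' := by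
  classical
  have hlen := r.one_le_length
  have hanc_sp : Ancestor T z r.sPlus r.s := conv_anc_sPlus hr
  have hadj_s : T.Adj r.s r.sPlus := req_adj_s_sPlus r
  have hanc_ts : Ancestor T z r.tMinus r.s := conv_anc_tMinus_s hT hr
  have hanc_tt : Ancestor T z r'.t r'.tMinus := conv_anc_t_tMinus hr'
  have hadj_t' : T.Adj r'.tMinus r'.t := req_adj_tMinus_t r'
  have hanc_tms : Ancestor T z r'.tMinus r.s := anc_trans hT h hanc_ts
  have hanc_t's : Ancestor T z r'.t r.s := anc_trans hT hanc_tt hanc_tms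
  have ht' : r'.t ∈ (pz hT z r.s).support := (anc_iff hT).1 hanc_t's
  have hdpath : ((pz hT z r.s).dropUntil r'.t ht').IsPath := (pz_isPath _ _ _).dropUntil ht'
  have hne : r'.t ≠ r.s := by
    intro he
    have h2 : Ancestor T z r'.tMinus r'.t := by rw [he]; exact hanc_tms
    exact hadj_t'.ne (anc_antisymm hT h2 hanc_tt)
  have hdl : 1 ≤ ((pz hT z r.s).dropUntil r'.t ht').length := by
    rcases Nat.eq_zero_or_pos ((pz hT z r.s).dropUntil r'.t ht').length with h0 | h0
    · exact absurd (eq_of_length_eq_zero h0) hne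
    · omega
  have hpen_pz : (pz hT z r.s).getVert ((pz hT z r.s).length - 1) = r.sPlus :=
    parent_eq hT hadj_s.symm hanc_sp
  have hspec : ((pz hT z r.s).takeUntil r'.t ht').append ((pz hT z r.s).dropUntil r'.t ht')
      = pz hT z r.s := take_spec _ ht'
  have hlen_eq : ((pz hT z r.s).takeUntil r'.t ht').length
      + ((pz hT z r.s).dropUntil r'.t ht').length = (pz hT z r.s).length := by
    rw [← length_append, hspec]
  have hpen_d : ((pz hT z r.s).dropUntil r'.t ht').getVert
      (((pz hT z r.s).dropUntil r'.t ht').length - 1) = r.sPlus := by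
    have h2 : (((pz hT z r.s).takeUntil r'.t ht').append
        ((pz hT z r.s).dropUntil r'.t ht')).getVert ((pz hT z r.s).length - 1) = r.sPlus := by
      rw [hspec]; exact hpen_pz
    rw [getVert_append, if_neg (by omega)] at h2
    rwa [show (pz hT z r.s).length - 1 - ((pz hT z r.s).takeUntil r'.t ht').length
      = ((pz hT z r.s).dropUntil r'.t ht').length - 1 by omega] at h2
  have hadj_d : T.Adj r'.t (((pz hT z r.s).dropUntil r'.t ht').getVert 1) := by
    have h3 := ((pz hT z r.s).dropUntil r'.t ht').adj_getVert_succ (i := 0) (by omega)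
    rwa [getVert_zero] at h3
  have hmem_d1 : ((pz hT z r.s).dropUntil r'.t ht').getVert 1
      ∈ ((pz hT z r.s).dropUntil r'.t ht').support :=
    mem_support_iff_exists_getVert.2 ⟨1, rfl, by omega⟩
  have hanc1 : Ancestor T z r'.t (((pz hT z r.s).dropUntil r'.t ht').getVert 1) :=
    anc_of_mem_drop hT ht' hmem_d1
  have hanc2 : Ancestor T z (((pz hT z r.s).dropUntil r'.t ht').getVert 1) r.s :=
    (anc_iff hT).2 (support_dropUntil_subset _ ht' hmem_d1)
  have hd1 : r'.tMinus = ((pz hT z r.s).dropUntil r'.t ht').getVert 1 :=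
    child_uniq hT hadj_t'.symm hadj_d hanc_tt hanc1 hanc_tms hanc2
  refine ⟨((pz hT z r.s).dropUntil r'.t ht').reverse, hdpath.reverse,
    by rwa [length_reverse], ?_, ?_⟩
  · rw [getVert_reverse]
    exact hpen_d
  · rw [length_reverse, getVert_reverse,
      show ((pz hT z r.s).dropUntil r'.t ht').length
        - (((pz hT z r.s).dropUntil r'.t ht').length - 1) = 1 by omega]
    exact hd1.symm

theorem interfere_iff_conv (hT : T.IsTree) {z : V} {r r' : Request T}
    (hr : Converging T z r) (hr' : Converging T z r') :
    Interfere T r r' ↔ Related T z r.tMinus r'.tMinus := by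
  constructor
  · rintro (h | h)
    · exact related_of_interferesOn hT hr hr' h
    · exact Or.symm (related_of_interferesOn hT hr' hr h)
  · intro h
    have h' : Ancestor T z r.tMinus r'.tMinus ∨ Ancestor T z r'.tMinus r.tMinus := h
    rcases h' with h1 | h1
    · exact Or.inr (interferesOn_of_anc hT hr' hr h1)
    · exact Or.inl (interferesOn_of_anc hT hr hr' h1)

/-- The reverse of a request. -/
def Request.rev (r : Request T) : Request T :=
  ⟨r.t, r.s, r.toWalk.reverse, r.isPath.reverse, by rw [length_reverse]; exact r.one_le_length⟩

theorem Request.rev_rev (r : Request T) : r.rev.rev = r := by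
  cases r
  simp [Request.rev]

theorem tMinus_rev (r : Request T) : r.rev.tMinus = r.sPlus := by
  have h1 := r.one_le_length
  simp only [Request.tMinus, Request.sPlus, Request.rev, length_reverse, getVert_reverse]
  congr 1
  omega

theorem sPlus_rev (r : Request T) : r.rev.sPlus = r.tMinus := by
  simp only [Request.sPlus, Request.tMinus, Request.rev, getVert_reverse]

theorem conv_of_div {z : V} {r : Request T} (hd : Diverging T z r) :
    Converging T z r.rev := by
  intro i hi
  simp only [Request.rev, length_reverse] at hi
  simp only [Request.rev, getVert_reverse, length_reverse]
  have h1 : r.toWalk.length - (i + 1) < r.toWalk.length := by omega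
  have h2 := hd _ h1
  rw [show r.toWalk.length - i = (r.toWalk.length - (i + 1)) + 1 by omega]
  exact h2

theorem io_rev {r r' : Request T} (h : InterferesOn T r r') :
    InterferesOn T r'.rev r.rev := by
  obtain ⟨p, hp, hl, h1, h2⟩ := h
  show ∃ q : T.Walk r'.t r.s, q.IsPath ∧ 1 ≤ q.length ∧
    q.getVert 1 = r'.rev.sPlus ∧ q.getVert (q.length - 1) = r.rev.tMinus
  refine ⟨p.reverse, hp.reverse, by rwa [length_reverse], ?_, ?_⟩
  · rw [getVert_reverse, h2]
    exact (sPlus_rev r').symm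
  · rw [length_reverse, getVert_reverse,
      show p.length - (p.length - 1) = 1 by omega, h1]
    exact (tMinus_rev r).symm

theorem interferesOn_rev_iff {r r' : Request T} :
    InterferesOn T r r' ↔ InterferesOn T r'.rev r.rev := by
  constructor
  · exact io_rev
  · intro h
    have h2 := io_rev h
    rwa [Request.rev_rev, Request.rev_rev] at h2

theorem interfere_iff_div (hT : T.IsTree) {z : V} {r r' : Request T}
    (hr : Diverging T z r) (hr' : Diverging T z r') :
    Interfere T r r' ↔ Related T z r.sPlus r'.sPlus := by
  have key : Interfere T r r' ↔ Interfere T r.rev r'.rev := by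
    constructor
    · rintro (h | h)
      · exact Or.inr (io_rev h)
      · exact Or.inl (io_rev h)
    · rintro (h | h)
      · exact Or.inr (interferesOn_rev_iff.2 h)
      · exact Or.inl (interferesOn_rev_iff.2 h)
  rw [key, interfere_iff_conv hT (conv_of_div hr) (conv_of_div hr'),
    tMinus_rev, tMinus_rev]

theorem comparability_of_key (hT : T.IsTree) (z : V) (S : Set (Request T))
    (key : Request T → V)
    (hkey : ∀ a ∈ S, ∀ b ∈ S, (Interfere T a b ↔ Related T z (key a) (key b))) :
    IsComparabilityGraph (interGraph T S) := by
  classical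
  refine ⟨fun a b => a = b ∨ (Ancestor T z (key ↑b) (key ↑a) ∧
    (key (↑a : Request T) = key ↑b → WellOrderingRel a b)),
    { refl := fun a => Or.inl rfl, trans := ?_, antisymm := ?_ }, ?_⟩
  · rintro a b c (rfl | ⟨h1, h2⟩) hbc
    · exact hbc
    rcases hbc with rfl | ⟨h3, h4⟩
    · exact Or.inr ⟨h1, h2⟩
    refine Or.inr ⟨anc_trans hT h3 h1, fun hac => ?_⟩
    have hab : key (↑a : Request T) = key ↑b := by
      exact anc_antisymm hT (hac ▸ h3 : Ancestor T z (key ↑a) (key ↑b)) h1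
    have hbc' : key (↑b : Request T) = key ↑c := hab ▸ hac
    exact IsTrans.trans _ _ _ (h2 hab) (h4 hbc')
  · rintro a b (rfl | ⟨h1, h2⟩) hba
    · rfl
    rcases hba with rfl | ⟨h3, h4⟩
    · rfl
    have hk : key (↑a : Request T) = key ↑b := anc_antisymm hT h3 h1
    exact absurd (IsTrans.trans _ _ _ (h2 hk) (h4 hk.symm)) (Std.Irrefl.irrefl a)
  · intro a b
    constructor
    · intro hadj
      have h' : a ≠ b ∧ Interfere T ↑a ↑b := hadj
      refine ⟨h'.1, ?_⟩
      have hrel : Related T z (key ↑a) (key ↑b) := (hkey _ a.2 _ b.2).1 h'.2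
      by_cases hk : key (↑a : Request T) = key ↑b
      · rcases trichotomous_of WellOrderingRel a b with hw | he | hw
        · exact Or.inl (Or.inr ⟨hk ▸ anc_refl hT z _, fun _ => hw⟩)
        · exact absurd he h'.1
        · exact Or.inr (Or.inr ⟨hk ▸ anc_refl hT z _, fun _ => hw⟩)
      · have hrel' : Ancestor T z (key ↑a) (key ↑b) ∨ Ancestor T z (key ↑b) (key ↑a) := hrel
        rcases hrel' with h1 | h1
        · exact Or.inr (Or.inr ⟨h1, fun hba => absurd hba.symm hk⟩)
        · exact Or.inl (Or.inr ⟨h1, fun hab => absurd hab hk⟩)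
    · rintro ⟨hne, hle⟩
      have hrel : Related T z (key ↑a) (key ↑b) := by
        rcases hle with (rfl | ⟨h1, _⟩) | (rfl | ⟨h1, _⟩)
        · exact absurd rfl hne
        · exact Or.inr h1
        · exact absurd rfl hne
        · exact Or.inl h1
      exact (⟨hne, (hkey _ a.2 _ b.2).2 hrel⟩ :
        a ≠ b ∧ Interfere T (↑a : Request T) ↑b)

end RequestAux

/-- Corollary 4(i)-(ii): the interference graphs of the converging requests and
of the diverging requests of `R` are comparability graphs. -/
theorem conv_div_comparability {V : Type*} (T : SimpleGraph V) (hT : T.IsTree)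
    (z : V) (R : Set (Request T)) :
    IsComparabilityGraph (interGraph T {r ∈ R | Converging T z r}) ∧
    IsComparabilityGraph (interGraph T {r ∈ R | Diverging T z r}) := by
  constructor
  · exact comparability_of_key hT z _ Request.tMinus
      (fun a ha b hb => interfere_iff_conv hT ha.2 hb.2)
  · exact comparability_of_key hT z _ Request.sPlus
      (fun a ha b hb => interfere_iff_div hT ha.2 hb.2)
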